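/- Let (X,f) be a dynamical system, where X is a compact metric space and f : X → X is continuous. If E(X,f)* = E(X,f) \ {fⁿ : n ∈ ℕ} is finite, then the set P_f of all minimal periods of periodic points of f is finite. -/
import Mathlib

open Filter Function Set Topology

/-- Auxiliary lemma: if the iterates of `f` are pairwise distinct and the Ellis remainder is
finite (hence the Ellis semigroup is countable), then no iterate `f^[m]` is a cluster point of
the tail sequence of iterates.  (Otherwise the closure of the tail would be a nonempty compact
Hausdorff space in which every point of a dense subset is non-isolated, contradicting the Baire
category theorem for countable compact Hausdorff spaces.) -/
private lemma iter_not_cluster {X : Type*} [MetricSpace X] [CompactSpace X]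
    (f : X → X) (hf : Continuous f)
    (hinj : Function.Injective (fun n : ℕ => f^[n]))
    (hfin : (closure {g : X → X | ∃ n : ℕ, g = f^[n]} \
      {g : X → X | ∃ n : ℕ, g = f^[n]}).Finite)
    (m : ℕ)
    (H : ∀ N : ℕ, f^[m] ∈ closure {g : X → X | ∃ n : ℕ, N ≤ n ∧ g = f^[n]}) :
    False := by
  -- every iterate beyond `m` is also a cluster point of every tail
  have step1 : ∀ j N : ℕ, f^[m + j] ∈ closure {g : X → X | ∃ n : ℕ, N ≤ n ∧ g = f^[n]} := by
    intro j N
    have hcont : Continuous fun g : X → X => f^[j] ∘ g :=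
      continuous_pi fun x => (hf.iterate j).comp (continuous_apply x)
    have hmaps : Set.MapsTo (fun g : X → X => f^[j] ∘ g)
        {g : X → X | ∃ n : ℕ, N ≤ n ∧ g = f^[n]}
        {g : X → X | ∃ n : ℕ, N ≤ n ∧ g = f^[n]} := by
      rintro g ⟨n, hn, rfl⟩
      exact ⟨j + n, le_trans hn (Nat.le_add_left _ _), (Function.iterate_add f j n).symm⟩
    have := map_mem_closure hcont (H N) hmaps
    have heq : f^[j] ∘ f^[m] = f^[m + j] := by
      rw [add_comm, Function.iterate_add]
    rwa [heq] at this
  set T : Set (X → X) := {g | ∃ n : ℕ, m ≤ n ∧ g = f^[n]} with hT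
  set K : Set (X → X) := closure T with hK
  have hTsubK : T ⊆ K := subset_closure
  have hKcomp : IsCompact K := isClosed_closure.isCompact
  have hKcount : K.Countable := by
    have h1 : ({g : X → X | ∃ n : ℕ, g = f^[n]}).Countable := by
      apply (countable_range fun n : ℕ => f^[n]).mono
      rintro g ⟨n, rfl⟩; exact ⟨n, rfl⟩
    have h2 : (closure {g : X → X | ∃ n : ℕ, g = f^[n]}).Countable := by
      have : closure {g : X → X | ∃ n : ℕ, g = f^[n]} ⊆
          {g : X → X | ∃ n : ℕ, g = f^[n]} ∪
          (closure {g : X → X | ∃ n : ℕ, g = f^[n]} \ {g : X → X | ∃ n : ℕ, g = f^[n]}) := by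
        intro g hg
        by_cases hgS : g ∈ {g : X → X | ∃ n : ℕ, g = f^[n]}
        · exact Or.inl hgS
        · exact Or.inr ⟨hg, hgS⟩
      exact (h1.union hfin.countable).mono this
    apply h2.mono
    apply closure_mono
    rintro g ⟨n, _, rfl⟩; exact ⟨n, rfl⟩
  haveI : CompactSpace ↥K := isCompact_iff_compactSpace.mp hKcomp
  haveI : Countable ↥K := hKcount.to_subtype
  haveI : T2Space (X → X) := inferInstance
  haveI : LocallyCompactSpace ↥K := inferInstance
  haveI : BaireSpace ↥K := inferInstance
  haveI : Nonempty ↥K := ⟨⟨f^[m], hTsubK ⟨m, le_refl m, rfl⟩⟩⟩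
  obtain ⟨e, he⟩ := exists_surjective_nat ↥K
  have hun : (⋃ n, ({e n} : Set ↥K)) = univ := by
    ext y; simp only [mem_iUnion, mem_singleton_iff, mem_univ, iff_true]
    obtain ⟨n, rfl⟩ := he y; exact ⟨n, rfl⟩
  obtain ⟨n0, hn0⟩ := nonempty_interior_of_iUnion_of_closed
    (fun n => isClosed_singleton (x := e n)) hun
  -- the singleton {e n0} is open in K
  have hopen : IsOpen ({e n0} : Set ↥K) := by
    have hsub : interior ({e n0} : Set ↥K) ⊆ {e n0} := interior_subset
    obtain ⟨y, hy⟩ := hn0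
    have hy' : y = e n0 := hsub hy
    have : interior ({e n0} : Set ↥K) = {e n0} := by
      apply Subset.antisymm hsub
      intro z hz
      rw [mem_singleton_iff] at hz
      subst hz
      exact hy' ▸ hy
    rw [← this]; exact isOpen_interior
  obtain ⟨U, hU, hUeq⟩ := isOpen_induced_iff.mp hopen
  have hgU : (e n0 : X → X) ∈ U := by
    have : e n0 ∈ (Subtype.val ⁻¹' U : Set ↥K) := by rw [hUeq]; rfl
    exact this
  -- the isolated point e n0 belongs to T
  have hgT : (e n0 : X → X) ∈ T := by
    have hcl : (e n0 : X → X) ∈ closure T := (e n0).2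
    obtain ⟨t, htU, htT⟩ := mem_closure_iff.mp hcl U hU hgU
    have : (⟨t, hTsubK htT⟩ : ↥K) ∈ (Subtype.val ⁻¹' U : Set ↥K) := htU
    rw [hUeq, mem_singleton_iff] at this
    have : t = (e n0 : X → X) := congrArg Subtype.val this
    rwa [← this]
  obtain ⟨n1, hmn1, hgeq⟩ := hgT
  -- but e n0 = f^[n1] is a cluster point of a tail avoiding it
  have hcl2 : (e n0 : X → X) ∈ closure {g : X → X | ∃ n : ℕ, n1 + 1 ≤ n ∧ g = f^[n]} := by
    rw [hgeq]
    have := step1 (n1 - m) (n1 + 1)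
    rwa [Nat.add_sub_cancel' hmn1] at this
  obtain ⟨t, htU, ht⟩ := mem_closure_iff.mp hcl2 U hU hgU
  obtain ⟨n2, hn2, rfl⟩ := ht
  have htT : f^[n2] ∈ T := ⟨n2, le_trans hmn1 (by omega), rfl⟩
  have : (⟨f^[n2], hTsubK htT⟩ : ↥K) ∈ (Subtype.val ⁻¹' U : Set ↥K) := htU
  rw [hUeq, mem_singleton_iff] at this
  have heq2 : f^[n2] = f^[n1] := by
    have := congrArg Subtype.val this
    simpa [hgeq] using this
  have : n2 = n1 := hinj heq2
  omega

/-- Corollary 2.4: If `E(X,f)* = E(X,f) \ {fⁿ : n ∈ ℕ}` is finite, then the set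
`P_f` of minimal periods of the periodic points of `f` is finite. -/
theorem periods_finite_of_ellis_star_finite {X : Type*} [MetricSpace X] [CompactSpace X]
    (f : X → X) (hf : Continuous f)
    (hfin : (closure {g : X → X | ∃ n : ℕ, g = f^[n]} \
      {g : X → X | ∃ n : ℕ, g = f^[n]}).Finite) :
    {n : ℕ | 0 < n ∧ ∃ x : X, Function.minimalPeriod f x = n}.Finite := by
  by_cases hinj : Function.Injective (fun n : ℕ => f^[n])
  · -- injective case: every minimal period is at most the cardinality of E*
    set Es : Set (X → X) := closure {g : X → X | ∃ n : ℕ, g = f^[n]} \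
      {g : X → X | ∃ n : ℕ, g = f^[n]} with hEs
    have key : ∀ p ∈ {n : ℕ | 0 < n ∧ ∃ x : X, Function.minimalPeriod f x = n},
        p ≤ Es.ncard := by
      rintro p ⟨hp, x, hx⟩
      have hxper : IsPeriodicPt f p x := hx ▸ isPeriodicPt_minimalPeriod f x
      set V : Ultrafilter ℕ := Ultrafilter.of atTop with hV0
      have hV : ↑V ≤ (atTop : Filter ℕ) := Ultrafilter.of_le _
      have main : ∀ r : ℕ, ∃ g : X → X, g ∈ Es ∧ g x = f^[r] x := by
        intro r
        obtain ⟨g, -, hg⟩ := isCompact_univ.ultrafilter_le_nhds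
          (V.map fun n => f^[r + n * p]) (le_principal_iff.mpr univ_mem)
        have htend : Tendsto (fun n => f^[r + n * p]) V (𝓝 g) := hg
        have hval : g x = f^[r] x := by
          have h1 : Tendsto (fun n => f^[r + n * p] x) V (𝓝 (g x)) :=
            (tendsto_pi_nhds.mp htend) x
          have h2 : (fun n : ℕ => f^[r + n * p] x) = fun _ => f^[r] x := by
            funext n
            rw [Function.iterate_add_apply]
            congr 1
            exact (hxper.const_mul n)
          rw [h2] at h1
          exact tendsto_nhds_unique h1 tendsto_const_nhds
        have hgc : g ∈ closure {g : X → X | ∃ n : ℕ, g = f^[n]} :=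
          mem_closure_of_tendsto htend (Eventually.of_forall fun n => ⟨r + n * p, rfl⟩)
        refine ⟨g, ⟨hgc, ?_⟩, hval⟩
        rintro ⟨mm, rfl⟩
        refine iter_not_cluster f hf hinj hfin mm (fun N => ?_)
        refine mem_closure_of_tendsto htend ?_
        filter_upwards [hV (eventually_ge_atTop N)] with n hn
        refine ⟨r + n * p, ?_, rfl⟩
        have : n ≤ n * p := Nat.le_mul_of_pos_right n hp
        omega
      choose gg hgmem hgval using main
      have hinj2 : Function.Injective fun r : Fin p => (⟨gg r, hgmem r⟩ : ↥Es) := by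
        intro r s h
        have hval : gg (r : ℕ) = gg (s : ℕ) := congrArg Subtype.val h
        have : f^[(r : ℕ)] x = f^[(s : ℕ)] x := by
          rw [← hgval (r : ℕ), ← hgval (s : ℕ), hval]
        have hr : (r : ℕ) ∈ Set.Iio (Function.minimalPeriod f x) := by
          simp [hx, r.2]
        have hs : (s : ℕ) ∈ Set.Iio (Function.minimalPeriod f x) := by
          simp [hx, s.2]
        exact Fin.ext (Function.iterate_injOn_Iio_minimalPeriod hr hs this)
      haveI : Finite ↥Es := hfin.to_subtype
      calc p = Nat.card (Fin p) := by simp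
        _ ≤ Nat.card ↥Es := Nat.card_le_card_of_injective _ hinj2
        _ = Es.ncard := Nat.card_coe_set_eq Es
    exact (Set.finite_Iic Es.ncard).subset fun p hp => key p hp
  · -- non-injective case: some `f^[a] = f^[b]` with `a < b`, every period divides `b - a`
    obtain ⟨a, b, heq, hne⟩ := Function.not_injective_iff.mp hinj
    have main : ∀ a b : ℕ, a < b → f^[a] = f^[b] →
        {n : ℕ | 0 < n ∧ ∃ x : X, Function.minimalPeriod f x = n}.Finite := by
      intro a b hab heq
      apply (Set.finite_Iic (b - a)).subset
      rintro p ⟨hp, x, hx⟩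
      have hxper : IsPeriodicPt f p x := hx ▸ isPeriodicPt_minimalPeriod f x
      have hxmem : x ∈ periodicPts f := ⟨p, hp, hxper⟩
      have h1 : IsPeriodicPt f (b - a) (f^[a] x) := by
        have hcalc : f^[b - a] (f^[a] x) = f^[b] x := by
          rw [← Function.iterate_add_apply, Nat.sub_add_cancel hab.le]
        show f^[b - a] (f^[a] x) = f^[a] x
        rw [hcalc, ← heq]
      have h2 : Function.minimalPeriod f (f^[a] x) = p := by
        rw [Function.minimalPeriod_apply_iterate hxmem a, hx]
      have hdvd : p ∣ b - a := by
        rw [← h2]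
        exact Function.IsPeriodicPt.minimalPeriod_dvd h1
      exact Set.mem_Iic.mpr (Nat.le_of_dvd (by omega) hdvd)
    rcases hne.lt_or_gt with h | h
    · exact main a b h heq
    · exact main b a h heq.symm
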